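/- Let G be a finite connected graph with ν vertices. Define the equivalence relation ∼ on the edge set of G as the equivalence relation generated by: e ∼ e' if e = e' or {e, e'} is a bond. Let F be a set of edges of G consisting of all cut edges of G together with, for each ∼-equivalence class of cardinality q ≥ 2, some choice of q − 1 of its edges. Then the spanning subgraph of G with edge set F contains no cycle; consequently the cardinality of F is at most ν − 1. -/

import Mathlib

/-- A bond of a connected graph `G` is a minimal nonempty set of edges of `G`
whose deletion disconnects `G`: deleting it disconnects `G`, but deleting any
proper subset leaves the graph connected. -/
def SimpleGraph.IsBond {V : Type*} (G : SimpleGraph V) (E' : Set (Sym2 V)) : Prop :=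
  E'.Nonempty ∧ E' ⊆ G.edgeSet ∧ ¬ (G.deleteEdges E').Connected ∧
    ∀ F ⊂ E', (G.deleteEdges F).Connected

/-- The equivalence relation `∼` on edges, generated by: `e ∼ e'` if `e = e'`
or `{e, e'}` is a bond. -/
def SimpleGraph.EdgeEquiv {V : Type*} (G : SimpleGraph V) (e e' : Sym2 V) : Prop :=
  Relation.EqvGen (fun a b => a = b ∨ G.IsBond {a, b}) e e'

open SimpleGraph in
/-- Deleting an edge lying on a cycle preserves connectivity. -/
lemma SimpleGraph.connected_deleteEdges_of_mem_cycle {V : Type*} {G : SimpleGraph V}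
    (hG : G.Connected) {u : V} {p : G.Walk u u} (hp : p.IsCycle) {e : Sym2 V}
    (he : e ∈ p.edges) : (G.deleteEdges {e}).Connected := by
  induction e using Sym2.ind with
  | _ x y =>
    have hreach : (G \ fromEdgeSet {s(x, y)}).Reachable x y :=
      (adj_and_reachable_delete_edges_iff_exists_cycle.mpr ⟨u, p, hp, he⟩).2
    have hreach' : (G.deleteEdges {s(x, y)}).Reachable x y := hreach
    rw [connected_iff] at hG ⊢
    refine ⟨?_, hG.2⟩
    have key : ∀ {c d : V} (_ : G.Walk c d), (G.deleteEdges {s(x, y)}).Reachable c d := by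
      intro c d w
      induction w with
      | nil => exact Reachable.refl _
      | @cons c m d h q ih =>
        refine Reachable.trans ?_ ih
        by_cases hce : s(c, m) = s(x, y)
        · rw [Sym2.eq_iff] at hce
          rcases hce with ⟨rfl, rfl⟩ | ⟨rfl, rfl⟩
          · exact hreach'
          · exact hreach'.symm
        · exact Adj.reachable (by simp [h, hce])
    intro a b
    exact key (hG.1 a b).some

open SimpleGraph in
/-- If `{a, b}` is a bond, any cycle through `a` passes through `b`. -/
lemma SimpleGraph.mem_edges_of_isBond {V : Type*} {G : SimpleGraph V} (hG : G.Connected)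
    {a b : Sym2 V} (hbond : G.IsBond {a, b}) {u : V} {p : G.Walk u u} (hp : p.IsCycle)
    (ha : a ∈ p.edges) : b ∈ p.edges := by
  by_cases hab : a = b
  · rwa [← hab]
  by_contra hb
  obtain ⟨-, -, hdis, hmin⟩ := hbond
  have hconnb : (G.deleteEdges {b}).Connected := by
    refine hmin {b} ⟨by intro z hz; simp only [Set.mem_singleton_iff] at hz; simp [hz], ?_⟩
    intro hsup
    exact hab (Set.mem_singleton_iff.mp (hsup (by simp)))
  have hedges : ∀ e ∈ p.edges, e ∈ (G.deleteEdges {b}).edgeSet := by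
    intro e hep
    rw [SimpleGraph.edgeSet_deleteEdges]
    exact ⟨p.edges_subset_edgeSet hep, by
      simp only [Set.mem_singleton_iff]; rintro rfl; exact hb hep⟩
  have hcyc' : (p.transfer _ hedges).IsCycle := hp.transfer hedges
  have ha' : a ∈ (p.transfer _ hedges).edges := by rwa [SimpleGraph.Walk.edges_transfer]
  have := SimpleGraph.connected_deleteEdges_of_mem_cycle hconnb hcyc' ha'
  rw [SimpleGraph.deleteEdges_deleteEdges] at this
  have hset : ({b} : Set (Sym2 V)) ∪ {a} = {a, b} := by
    rw [Set.union_comm, Set.singleton_union]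
  rw [hset] at this
  exact hdis this

open SimpleGraph in
/-- Along the edge-equivalence relation, membership in a cycle is invariant. -/
lemma SimpleGraph.mem_edges_iff_of_edgeEquiv {V : Type*} {G : SimpleGraph V} (hG : G.Connected)
    {u : V} {p : G.Walk u u} (hp : p.IsCycle) {a b : Sym2 V} (h : G.EdgeEquiv a b) :
    (a ∈ p.edges ↔ b ∈ p.edges) := by
  induction h with
  | rel x y hxy =>
    rcases hxy with rfl | hbond
    · exact Iff.rfl
    · constructor
      · exact fun hx => SimpleGraph.mem_edges_of_isBond hG hbond hp hx
      · intro hy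
        exact SimpleGraph.mem_edges_of_isBond hG (by rwa [Set.pair_comm] at hbond) hp hy
  | refl x => exact Iff.rfl
  | symm x y _ ih => exact ih.symm
  | trans x y z _ _ ih1 ih2 => exact ih1.trans ih2

open SimpleGraph in
/-- Any acyclic subgraph of a finite connected graph extends to a spanning tree. -/
lemma SimpleGraph.exists_isTree_le {V : Type*} [Fintype V] {G H : SimpleGraph V}
    (hG : G.Connected) (hHG : H ≤ G) (hH : H.IsAcyclic) :
    ∃ T : SimpleGraph V, H ≤ T ∧ T ≤ G ∧ T.IsTree := by
  classical
  have hfinI : Finite (SimpleGraph V) :=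
    Finite.of_injective (fun K : SimpleGraph V => K.Adj)
      (fun K L h => SimpleGraph.ext h)
  have hfin : (setOf fun K : SimpleGraph V => H ≤ K ∧ K ≤ G ∧ K.IsAcyclic).Finite :=
    Set.toFinite _
  obtain ⟨K, ⟨hHK, hKG, hKac⟩, hmax⟩ :=
    Set.Finite.exists_maximalFor id _ hfin ⟨H, le_refl H, hHG, hH⟩
  refine ⟨K, hHK, hKG, ?_, hKac⟩
  rw [connected_iff]
  refine ⟨?_, hG.nonempty⟩
  by_contra hpre
  obtain ⟨u, v, huv⟩ : ∃ u v : V, ¬ K.Reachable u v := by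
    simp only [Preconnected, not_forall] at hpre
    exact ⟨hpre.choose, hpre.choose_spec.choose, hpre.choose_spec.choose_spec⟩
  have hstep : ∃ a b : V, G.Adj a b ∧ K.Reachable u a ∧ ¬ K.Reachable u b := by
    have main : ∀ {x y : V} (_ : G.Walk x y), K.Reachable u x → ¬ K.Reachable u y →
        ∃ a b : V, G.Adj a b ∧ K.Reachable u a ∧ ¬ K.Reachable u b := by
      intro x y w
      induction w with
      | nil => exact fun h1 h2 => absurd h1 h2
      | @cons c m d h q ih =>
        intro h1 h2
        by_cases hm : K.Reachable u m
        · exact ih hm h2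
        · exact ⟨c, m, h, h1, hm⟩
    exact main (hG.preconnected u v).some (Reachable.refl u) huv
  obtain ⟨a, b, hab, hua, hub⟩ := hstep
  have hnKab : ¬ K.Adj a b := fun h => hub (hua.trans h.reachable)
  set K' := K ⊔ fromEdgeSet {s(a, b)} with hK'def
  have hKK' : K ≤ K' := le_sup_left
  have hK'adj : K'.Adj a b := by
    refine Or.inr ?_
    exact (SimpleGraph.fromEdgeSet_adj _).mpr ⟨rfl, hab.ne⟩
  have hK'G : K' ≤ G := by
    refine sup_le hKG ?_
    intro x y hxy
    rw [SimpleGraph.fromEdgeSet_adj, Set.mem_singleton_iff, Sym2.eq_iff] at hxy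
    rcases hxy.1 with ⟨rfl, rfl⟩ | ⟨rfl, rfl⟩
    · exact hab
    · exact hab.symm
  have hK'ac : K'.IsAcyclic := by
    intro z c hc
    by_cases he : s(a, b) ∈ c.edges
    · have hr := (adj_and_reachable_delete_edges_iff_exists_cycle.mpr ⟨z, c, hc, he⟩).2
      have heq : K' \ fromEdgeSet {s(a, b)} = K := by
        ext x y
        simp only [sdiff_adj, hK'def, sup_adj, SimpleGraph.fromEdgeSet_adj,
          Set.mem_singleton_iff]
        constructor
        · rintro ⟨h | h, h2⟩
          · exact h
          · exact absurd h h2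
        · intro h
          refine ⟨Or.inl h, ?_⟩
          rintro ⟨heq2, -⟩
          rw [Sym2.eq_iff] at heq2
          rcases heq2 with ⟨rfl, rfl⟩ | ⟨rfl, rfl⟩
          · exact hnKab h
          · exact hnKab h.symm
      rw [SimpleGraph.deleteEdges, heq] at hr
      exact hub (hua.trans hr)
    · have hed : ∀ e ∈ c.edges, e ∈ K.edgeSet := by
        intro e hein
        have hmem := c.edges_subset_edgeSet hein
        rw [hK'def, SimpleGraph.edgeSet_sup, SimpleGraph.edgeSet_fromEdgeSet] at hmem
        rcases hmem with hmem | hmem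
        · exact hmem
        · exact absurd (Set.mem_singleton_iff.mp hmem.1 ▸ hein) (by rw [Set.mem_singleton_iff.mp hmem.1] at hein; exact absurd hein he)
      exact hKac (c.transfer K hed) (hc.transfer hed)
  have : K = K' := le_antisymm hKK' (hmax ⟨hHK.trans hKK', hK'G, hK'ac⟩ hKK')
  rw [← this] at hK'adj
  exact hnKab hK'adj

/-- Let `G` be a finite connected graph on `ν` vertices, and let `F` be a set
of edges of `G` consisting of all cut edges of `G` together with, from each
`∼`-equivalence class of cardinality `q ≥ 2`, some choice of `q − 1` of its
edges.  Then the spanning subgraph of `G` with edge set `F` contains no cycle;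
consequently `F` has at most `ν − 1` elements. -/
theorem chosen_edges_acyclic {V : Type*} [Fintype V]
    (G : SimpleGraph V) (hG : G.Connected) (F : Set (Sym2 V))
    (hFsub : F ⊆ G.edgeSet)
    (hbr : ∀ e : Sym2 V, G.IsBridge e → e ∈ F)
    (hFmem : ∀ e ∈ F, G.IsBridge e ∨ 2 ≤ {e' | G.EdgeEquiv e e'}.ncard)
    (hchoice : ∀ c ∈ G.edgeSet, 2 ≤ {e | G.EdgeEquiv c e}.ncard →
      ({e | G.EdgeEquiv c e} ∩ F).ncard = {e | G.EdgeEquiv c e}.ncard - 1) :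
    (∀ (v : V) (C : (SimpleGraph.fromEdgeSet F).Walk v v), ¬ C.IsCycle) ∧
      F.ncard ≤ Fintype.card V - 1 := by
  classical
  have hHle : SimpleGraph.fromEdgeSet F ≤ G := by
    calc SimpleGraph.fromEdgeSet F ≤ SimpleGraph.fromEdgeSet G.edgeSet :=
          SimpleGraph.fromEdgeSet_mono hFsub
      _ = G := SimpleGraph.fromEdgeSet_edgeSet G
  have hac : ∀ (v : V) (C : (SimpleGraph.fromEdgeSet F).Walk v v), ¬ C.IsCycle := by
    intro v C hC
    have hF : ∀ e ∈ C.edges, e ∈ F := by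
      intro e he
      have := C.edges_subset_edgeSet he
      rw [SimpleGraph.edgeSet_fromEdgeSet] at this
      exact this.1
    have hedG : ∀ e ∈ C.edges, e ∈ G.edgeSet := fun e he => hFsub (hF e he)
    have hC' : (C.transfer G hedG).IsCycle := hC.transfer hedG
    have hCed : (C.transfer G hedG).edges = C.edges := C.edges_transfer hedG
    obtain ⟨e, he⟩ : ∃ e, e ∈ C.edges := by
      cases C with
      | nil => exact absurd hC (SimpleGraph.Walk.IsCycle.not_of_nil)
      | cons h q => exact ⟨_, by rw [SimpleGraph.Walk.edges_cons]; exact List.mem_cons_self⟩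
    have heC' : e ∈ (C.transfer G hedG).edges := by rwa [hCed]
    have heF : e ∈ F := hF e he
    have heG : e ∈ G.edgeSet := hFsub heF
    have hnotbr : ¬ G.IsBridge e := by
      rw [SimpleGraph.isBridge_iff_mem_and_forall_cycle_notMem heG]
      intro h
      exact h (C.transfer G hedG) hC' heC'
    have hcard := (hFmem e heF).resolve_left hnotbr
    have hch := hchoice e heG hcard
    have hSF : {e' | G.EdgeEquiv e e'} ⊆ F := by
      intro b hb
      have hiff := SimpleGraph.mem_edges_iff_of_edgeEquiv hG hC' hb
      have hbC' : b ∈ (C.transfer G hedG).edges := hiff.mp heC'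
      rw [hCed] at hbC'
      exact hF b hbC'
    rw [Set.inter_eq_self_of_subset_left hSF] at hch
    omega
  refine ⟨hac, ?_⟩
  obtain ⟨T, hFT, hTG, hT⟩ := SimpleGraph.exists_isTree_le hG hHle hac
  have hFeq : F = (SimpleGraph.fromEdgeSet F).edgeSet := by
    rw [SimpleGraph.edgeSet_fromEdgeSet]
    refine (sdiff_eq_left.mpr ?_).symm
    exact Set.disjoint_left.mpr fun e he hd => G.not_isDiag_of_mem_edgeSet (hFsub he) hd
  haveI : Fintype ↥T.edgeSet := Fintype.ofFinite _
  have h1 : F.ncard ≤ T.edgeSet.ncard := by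
    rw [hFeq]
    exact Set.ncard_le_ncard (SimpleGraph.edgeSet_mono hFT) T.edgeSet.toFinite
  have h2 : T.edgeFinset.card + 1 = Fintype.card V := hT.card_edgeFinset
  have h3 : T.edgeSet.ncard = T.edgeFinset.card := by
    rw [SimpleGraph.edgeFinset, Set.ncard_eq_toFinset_card']
  omega
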